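/- For any natural numbers s₀, …, s_{f−1}, let M = R/(X₀^{s₀+1}, …, X_{f−1}^{s_{f−1}+1}). Then Ext¹_R(M, k) is isomorphic as an R-module to k^f; in particular it is an f-dimensional k-vector space. (Lemma 2.4 of the paper.) -/

import Mathlib

open CategoryTheory

/-- The `R`-module `M = R/(X₀^{s₀+1}, …, X_{f−1}^{s_{f−1}+1})`,
where `R = k[[X₀, …, X_{f−1}]]`. -/
noncomputable def KoszulQuot (k : Type) [Field k] (f : ℕ) (s : Fin f → ℕ) :
    Type :=
  MvPowerSeries (Fin f) k ⧸
    Ideal.span (Set.range fun i : Fin f =>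
      (MvPowerSeries.X i : MvPowerSeries (Fin f) k) ^ (s i + 1))

noncomputable instance (k : Type) [Field k] (f : ℕ) (s : Fin f → ℕ) :
    AddCommGroup (KoszulQuot k f s) :=
  inferInstanceAs (AddCommGroup (MvPowerSeries (Fin f) k ⧸
    Ideal.span (Set.range fun i : Fin f =>
      (MvPowerSeries.X i : MvPowerSeries (Fin f) k) ^ (s i + 1))))

noncomputable instance (k : Type) [Field k] (f : ℕ) (s : Fin f → ℕ) :
    Module (MvPowerSeries (Fin f) k) (KoszulQuot k f s) :=
  inferInstanceAs (Module (MvPowerSeries (Fin f) k) (MvPowerSeries (Fin f) k ⧸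
    Ideal.span (Set.range fun i : Fin f =>
      (MvPowerSeries.X i : MvPowerSeries (Fin f) k) ^ (s i + 1))))

/-- The residue field `k = R/(X₀, …, X_{f−1})` as an `R`-module. -/
noncomputable def ResidueField (k : Type) [Field k] (f : ℕ) : Type :=
  MvPowerSeries (Fin f) k ⧸
    Ideal.span (Set.range fun i : Fin f =>
      (MvPowerSeries.X i : MvPowerSeries (Fin f) k))

noncomputable instance (k : Type) [Field k] (f : ℕ) :
    AddCommGroup (ResidueField k f) :=
  inferInstanceAs (AddCommGroup (MvPowerSeries (Fin f) k ⧸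
    Ideal.span (Set.range fun i : Fin f =>
      (MvPowerSeries.X i : MvPowerSeries (Fin f) k))))

noncomputable instance (k : Type) [Field k] (f : ℕ) :
    Module (MvPowerSeries (Fin f) k) (ResidueField k f) :=
  inferInstanceAs (Module (MvPowerSeries (Fin f) k) (MvPowerSeries (Fin f) k ⧸
    Ideal.span (Set.range fun i : Fin f =>
      (MvPowerSeries.X i : MvPowerSeries (Fin f) k))))

/-- The `R`-module `Ext¹_R(M, k)`. -/
noncomputable def ExtOne (k : Type) [Field k] (f : ℕ) (s : Fin f → ℕ) :
    ModuleCat (MvPowerSeries (Fin f) k) :=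
  ((Ext (MvPowerSeries (Fin f) k) (ModuleCat (MvPowerSeries (Fin f) k)) 1).obj
      (Opposite.op (ModuleCat.of (MvPowerSeries (Fin f) k) (KoszulQuot k f s)))).obj
    (ModuleCat.of (MvPowerSeries (Fin f) k) (ResidueField k f))

namespace Statement0Aux

open MvPowerSeries Finsupp CategoryTheory.Limits

variable (k : Type) [Field k] (f : ℕ) (s : Fin f → ℕ)

/-- Every power series with zero constant coefficient lies in the ideal
generated by the variables. -/
theorem mem_span_X {p : MvPowerSeries (Fin f) k}
    (hp : MvPowerSeries.coeff (0 : Fin f →₀ ℕ) p = 0) :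
    p ∈ Ideal.span (Set.range fun i : Fin f =>
      (MvPowerSeries.X i : MvPowerSeries (Fin f) k)) := by
  classical
  set q : Fin f → MvPowerSeries (Fin f) k := fun i ν =>
    if ∀ j, j < i → ν j = 0 then MvPowerSeries.coeff (ν + Finsupp.single i 1) p else 0
    with hq
  have hcq : ∀ (i : Fin f) (ν : Fin f →₀ ℕ),
      MvPowerSeries.coeff ν (q i)
        = if ∀ j, j < i → ν j = 0
            then MvPowerSeries.coeff (ν + Finsupp.single i 1) p else 0 := by
    intro i ν; rw [MvPowerSeries.coeff_apply, hq]
  have hterm : ∀ (i : Fin f) (μ : Fin f →₀ ℕ),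
      MvPowerSeries.coeff μ (MvPowerSeries.X i * q i)
        = if Finsupp.single i 1 ≤ μ ∧ ∀ j, j < i → μ j = 0
            then MvPowerSeries.coeff μ p else 0 := by
    intro i μ
    rw [MvPowerSeries.X_def, MvPowerSeries.coeff_monomial_mul, hcq]
    by_cases h1 : Finsupp.single i 1 ≤ μ
    · have hsub : ∀ j, j < i → ((μ - Finsupp.single i 1 : Fin f →₀ ℕ)) j = μ j := by
        intro j hj
        have hne : i ≠ j := fun h => absurd h.symm (ne_of_lt hj)
        rw [Finsupp.tsub_apply, Finsupp.single_apply, if_neg hne]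
        simp
      have hadd : μ - Finsupp.single i 1 + Finsupp.single i 1 = μ :=
        tsub_add_cancel_of_le h1
      rw [if_pos h1, one_mul, hadd]
      refine if_congr ⟨fun h => ⟨h1, fun j hj => (hsub j hj) ▸ h j hj⟩,
        fun h j hj => (hsub j hj).trans (h.2 j hj)⟩ rfl rfl
    · rw [if_neg h1, if_neg (fun h => h1 h.1)]
  have hpq : p = ∑ i, MvPowerSeries.X i * q i := by
    ext μ
    rw [map_sum]
    by_cases hμ : μ = 0
    · subst hμ
      rw [hp]
      refine (Finset.sum_eq_zero fun i _ => ?_).symm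
      rw [hterm]
      refine if_neg fun h => ?_
      have := h.1 i
      simp [Finsupp.single_apply] at this
    · have hsupp : μ.support.Nonempty := Finsupp.support_nonempty_iff.2 hμ
      set i₀ := μ.support.min' hsupp with hi₀
      have hi₀mem : i₀ ∈ μ.support := μ.support.min'_mem hsupp
      have hμi₀ : μ i₀ ≠ 0 := Finsupp.mem_support_iff.1 hi₀mem
      have hcond : Finsupp.single i₀ 1 ≤ μ ∧ ∀ j, j < i₀ → μ j = 0 := by
        constructor
        · rw [Finsupp.single_le_iff]
          omega
        · intro j hj
          by_contra hjj
          have : i₀ ≤ j := μ.support.min'_le j (Finsupp.mem_support_iff.2 hjj)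
          exact absurd hj (not_lt.2 this)
      rw [Finset.sum_eq_single i₀ (fun i _ hi => ?_) (fun h => (h (Finset.mem_univ _)).elim)]
      · rw [hterm, if_pos hcond]
      · rw [hterm]
        refine if_neg fun h => hi ?_
        have hμi : μ i ≠ 0 := by
          have := Finsupp.single_le_iff.1 h.1
          omega
        have h1 : i₀ ≤ i := μ.support.min'_le i (Finsupp.mem_support_iff.2 hμi)
        rcases lt_or_eq_of_le h1 with hlt | heq
        · exact absurd (h.2 i₀ hlt) hμi₀
        · exact heq.symm
  rw [hpq]
  exact Ideal.sum_mem _ fun i _ =>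
    Ideal.mul_mem_right _ _ (Ideal.subset_span ⟨i, rfl⟩)

/-- If `∑ i, v i * X i ^ (s i + 1) = 0` then each `v i` has zero constant
coefficient. -/
theorem constantCoeff_eq_zero_of_sum_eq_zero (v : Fin f → MvPowerSeries (Fin f) k)
    (hv : ∑ i, v i * MvPowerSeries.X i ^ (s i + 1) = 0) (i : Fin f) :
    MvPowerSeries.coeff (0 : Fin f →₀ ℕ) (v i) = 0 := by
  classical
  have h := congrArg (MvPowerSeries.coeff (Finsupp.single i (s i + 1))) hv
  rw [map_sum, map_zero] at h
  rw [Finset.sum_eq_single i (fun j _ hj => ?_) (fun h' => (h' (Finset.mem_univ _)).elim)] at h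
  · rw [MvPowerSeries.X_pow_eq, MvPowerSeries.coeff_mul_monomial, if_pos le_rfl,
      tsub_self, mul_one] at h
    exact h
  · rw [MvPowerSeries.X_pow_eq, MvPowerSeries.coeff_mul_monomial, if_neg]
    intro hle
    have := Finsupp.single_le_iff.1 hle
    rw [Finsupp.single_apply, if_neg (fun hh => hj (by exact hh.symm ▸ rfl))] at this
    omega

/-- The span of the `X i ^ (s i + 1)` is contained in the span of the `X i`. -/
theorem span_pow_le :
    Ideal.span (Set.range fun i : Fin f =>
        (MvPowerSeries.X i : MvPowerSeries (Fin f) k) ^ (s i + 1))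
      ≤ Ideal.span (Set.range fun i : Fin f =>
        (MvPowerSeries.X i : MvPowerSeries (Fin f) k)) := by
  rw [Ideal.span_le]
  intro x hx
  obtain ⟨i, rfl⟩ := hx
  exact Ideal.pow_mem_of_mem _ (Ideal.subset_span (Set.mem_range_self i)) _ (Nat.succ_pos _)

/-- Elements of the maximal ideal annihilate the residue field. -/
theorem smul_residue_eq_zero {a : MvPowerSeries (Fin f) k}
    (ha : a ∈ Ideal.span (Set.range fun i : Fin f =>
      (MvPowerSeries.X i : MvPowerSeries (Fin f) k)))
    (y : MvPowerSeries (Fin f) k ⧸ Ideal.span (Set.range fun i : Fin f =>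
      (MvPowerSeries.X i : MvPowerSeries (Fin f) k))) : a • y = 0 := by
  obtain ⟨b, rfl⟩ := Submodule.Quotient.mk_surjective _ y
  rw [← Submodule.Quotient.mk_smul, Submodule.Quotient.mk_eq_zero]
  exact Ideal.mul_mem_right _ _ ha

noncomputable section CategoryPart

/-- The map `R^f → R`, `v ↦ ∑ i, v i * X i ^ (s i + 1)`. -/
def d1 : (Fin f → MvPowerSeries (Fin f) k) →ₗ[MvPowerSeries (Fin f) k]
    MvPowerSeries (Fin f) k where
  toFun v := ∑ i, v i * MvPowerSeries.X i ^ (s i + 1)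
  map_add' v w := by
    simp [add_mul, Finset.sum_add_distrib]
  map_smul' a v := by
    simp [Finset.mul_sum, smul_eq_mul, mul_assoc]

theorem d1_single (i : Fin f) :
    d1 k f s (Pi.single i 1) = MvPowerSeries.X i ^ (s i + 1) := by
  classical
  simp only [d1, LinearMap.coe_mk, AddHom.coe_mk]
  rw [Finset.sum_eq_single i (fun j _ hj => by
    rw [Pi.single_eq_of_ne hj, zero_mul]) (fun h => (h (Finset.mem_univ _)).elim),
    Pi.single_eq_same, one_mul]

theorem range_d1 :
    LinearMap.range (d1 k f s)
      = Ideal.span (Set.range fun i : Fin f =>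
          (MvPowerSeries.X i : MvPowerSeries (Fin f) k) ^ (s i + 1)) := by
  apply le_antisymm
  · rintro x hx
    obtain ⟨v, rfl⟩ := hx
    have hd : d1 k f s v = ∑ i, v i * MvPowerSeries.X i ^ (s i + 1) := rfl
    rw [hd]
    exact Ideal.sum_mem _ fun i _ =>
      Ideal.mul_mem_left _ _ (Ideal.subset_span (Set.mem_range_self i))
  · rw [Ideal.span_le]
    intro x hx
    obtain ⟨i, rfl⟩ := hx
    exact ⟨Pi.single i 1, d1_single k f s i⟩

open CategoryTheory

/-- Degree-0 object of the resolution: `R` itself. -/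
def P0 : ModuleCat (MvPowerSeries (Fin f) k) :=
  ModuleCat.of _ (MvPowerSeries (Fin f) k)

/-- Degree-1 object of the resolution: `R^f`. -/
def P1 : ModuleCat (MvPowerSeries (Fin f) k) :=
  ModuleCat.of _ (Fin f → MvPowerSeries (Fin f) k)

instance : Projective (P0 k f) :=
  ModuleCat.projective_of_free (Module.Basis.singleton Unit (MvPowerSeries (Fin f) k))

instance : Projective (P1 k f) :=
  ModuleCat.projective_of_free (Pi.basisFun (MvPowerSeries (Fin f) k) (Fin f))

/-- The differential `P1 ⟶ P0` in `ModuleCat`. -/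
def delta : P1 k f ⟶ P0 k f := ModuleCat.ofHom (d1 k f s)

/-- The projective resolution complex of `M`. -/
def complexC : ChainComplex (ModuleCat (MvPowerSeries (Fin f) k)) ℕ :=
  ChainComplex.mk' (P0 k f) (P1 k f) (delta k f s)
    (fun {X Y} g => ⟨Projective.syzygies g, Projective.d g, by dsimp only [Projective.d]; exact (Category.assoc _ _ _).trans ((congrArg _ (kernel.condition g)).trans comp_zero)⟩)

instance (n : ℕ) : Projective ((complexC k f s).X n) := by
  obtain (_ | _ | _ | n) := n
  · exact inferInstanceAs (Projective (P0 k f))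
  · exact inferInstanceAs (Projective (P1 k f))
  · apply Projective.projective_over
  · apply Projective.projective_over

theorem complexC_d_1_0 : (complexC k f s).d 1 0 = delta k f s := by
  simp [complexC]

theorem complexC_exactAt_succ (n : ℕ) : (complexC k f s).ExactAt (n + 1) := by
  rw [HomologicalComplex.exactAt_iff' _ (n + 1 + 1) (n + 1) n (by simp) (by simp)]
  dsimp [complexC, HomologicalComplex.sc', HomologicalComplex.shortComplexFunctor',
    ChainComplex.mk', ChainComplex.mk]
  match n with
  | 0 => apply exact_d_f
  | n + 1 => dsimp only [ChainComplex.of.d]; simp only [dif_pos, eqToHom_refl, Category.id_comp]; exact exact_d_f _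

/-- The projection `R → M` as a morphism in `ModuleCat`. -/
def pi0 : P0 k f ⟶ ModuleCat.of (MvPowerSeries (Fin f) k) (KoszulQuot k f s) :=
  ModuleCat.ofHom (Ideal.span (Set.range fun i : Fin f =>
    (MvPowerSeries.X i : MvPowerSeries (Fin f) k) ^ (s i + 1))).mkQ

theorem delta_comp_pi0 : delta k f s ≫ pi0 k f s = 0 := by
  apply ModuleCat.hom_ext
  apply LinearMap.ext
  intro v
  show (Ideal.span _).mkQ (d1 k f s v) = 0
  rw [Submodule.mkQ_apply, Submodule.Quotient.mk_eq_zero]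
  exact (range_d1 k f s).le (LinearMap.mem_range_self _ v)

theorem exact_delta_pi0 :
    (ShortComplex.mk (delta k f s) (pi0 k f s) (delta_comp_pi0 k f s)).Exact := by
  rw [ShortComplex.moduleCat_exact_iff_range_eq_ker]
  show LinearMap.range (d1 k f s) = LinearMap.ker (Submodule.mkQ _)
  rw [Submodule.ker_mkQ, range_d1]

instance : Epi (pi0 k f s) := by
  rw [ModuleCat.epi_iff_surjective]
  exact Submodule.mkQ_surjective _

/-- The explicit projective resolution of `M`. -/
def res : ProjectiveResolution
    (ModuleCat.of (MvPowerSeries (Fin f) k) (KoszulQuot k f s)) where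
  complex := complexC k f s
  π := (ChainComplex.toSingle₀Equiv _ _).symm ⟨pi0 k f s, by
    rw [complexC_d_1_0]; exact delta_comp_pi0 k f s⟩
  quasiIso := ⟨fun n => by
    cases n with
    | zero =>
      rw [ChainComplex.quasiIsoAt₀_iff, ShortComplex.quasiIso_iff_of_zeros']
      · refine (ShortComplex.exact_and_epi_g_iff_of_iso ?_).2
          ⟨exact_delta_pi0 k f s, inferInstance⟩
        exact ShortComplex.isoMk (Iso.refl _) (Iso.refl _) (Iso.refl _)
          (by simp [complexC_d_1_0]; rfl) (by simp [ChainComplex.toSingle₀Equiv]; rfl)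
      all_goals rfl
    | succ n =>
      rw [quasiIsoAt_iff_exactAt']
      · exact complexC_exactAt_succ k f s n
      · apply ChainComplex.exactAt_succ_single_obj⟩

end CategoryPart

noncomputable section HomologyPart

open CategoryTheory

/-- The residue field as an object of `ModuleCat`. -/
def Yc : ModuleCat (MvPowerSeries (Fin f) k) :=
  ModuleCat.of _ (ResidueField k f)

/-- The cochain complex `Hom(P_•, k)`. -/
def Kc : CochainComplex (ModuleCat (MvPowerSeries (Fin f) k)) ℕ :=
  (complexC k f s).linearYonedaObj (MvPowerSeries (Fin f) k) (Yc k f)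

/-- The short complex at position 1 of `Kc`. -/
def Sc : ShortComplex (ModuleCat (MvPowerSeries (Fin f) k)) :=
  (Kc k f s).sc' 0 1 2

theorem d21_comp_eq_zero (φ : (complexC k f s).X 1 ⟶ Yc k f) :
    (complexC k f s).d 2 1 ≫ φ = 0 := by
  apply ModuleCat.hom_ext
  apply LinearMap.ext
  intro u
  show φ ((complexC k f s).d 2 1 u) = 0
  set w : Fin f → MvPowerSeries (Fin f) k := (complexC k f s).d 2 1 u with hw
  have hδ : (∑ i, w i * MvPowerSeries.X i ^ (s i + 1)) = 0 := by
    have h0 := congrArg (fun g : (complexC k f s).X 2 ⟶ (complexC k f s).X 0 => g u)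
      ((complexC k f s).d_comp_d 2 1 0)
    simp only [complexC_d_1_0] at h0; exact h0
  have hwi : ∀ i, w i ∈ Ideal.span (Set.range fun i : Fin f =>
      (MvPowerSeries.X i : MvPowerSeries (Fin f) k)) := fun i =>
    mem_span_X k f (constantCoeff_eq_zero_of_sum_eq_zero k f s w hδ i)
  have hwsum : w = ∑ i, Pi.single i (w i) := (Finset.univ_sum_single w).symm
  let φ' : (Fin f → MvPowerSeries (Fin f) k) →ₗ[MvPowerSeries (Fin f) k] ResidueField k f := φ.hom
  change φ' w = 0
  rw [hwsum, map_sum]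
  refine Finset.sum_eq_zero fun i _ => ?_
  have hsingle : (Pi.single i (w i) : Fin f → MvPowerSeries (Fin f) k)
      = w i • (Pi.single i 1 : Fin f → MvPowerSeries (Fin f) k) := by
    rw [← Pi.single_smul, smul_eq_mul, mul_one]
  rw [hsingle, map_smul]
  exact smul_residue_eq_zero k f (hwi i) _

theorem delta_comp_eq_zero (ψ : (complexC k f s).X 0 ⟶ Yc k f) :
    (complexC k f s).d 1 0 ≫ ψ = 0 := by
  rw [complexC_d_1_0]
  apply ModuleCat.hom_ext
  apply LinearMap.ext
  intro (v : Fin f → MvPowerSeries (Fin f) k)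
  let ψ' : MvPowerSeries (Fin f) k →ₗ[MvPowerSeries (Fin f) k] ResidueField k f := ψ.hom
  change ψ' (d1 k f s v) = 0
  have h1 : d1 k f s v = d1 k f s v • (1 : MvPowerSeries (Fin f) k) := by
    rw [smul_eq_mul, mul_one]
  rw [h1, map_smul]
  refine smul_residue_eq_zero k f ?_ _
  exact span_pow_le k f s ((range_d1 k f s).le (LinearMap.mem_range_self _ v))

theorem ker_g_eq_top : LinearMap.ker (Sc k f s).g.hom = ⊤ := by
  rw [eq_top_iff]
  intro φ _
  have hφ : (Sc k f s).g.hom φ = (complexC k f s).d 2 1 ≫ φ := rfl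
  rw [LinearMap.mem_ker, hφ]
  exact d21_comp_eq_zero k f s φ

theorem range_toCycles_eq_bot :
    LinearMap.range (Sc k f s).moduleCatToCycles = ⊥ := by
  rw [LinearMap.range_eq_bot]
  apply LinearMap.ext
  intro ψ
  apply Subtype.ext
  show (Sc k f s).f.hom ψ = 0
  have hψ : (Sc k f s).f.hom ψ = (complexC k f s).d 1 0 ≫ ψ := rfl
  rw [hψ]
  exact delta_comp_eq_zero k f s ψ

/-- The concrete description of `Ext¹`. -/
def extOneEquiv : ExtOne k f s ≃ₗ[MvPowerSeries (Fin f) k]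
    (Fin f → ResidueField k f) :=
  (((res k f s).isoExt 1 (Yc k f) ≪≫
      (Kc k f s).homologyIsoSc' 0 1 2 (by simp) (by simp) ≪≫
      (Sc k f s).moduleCatHomologyIso).toLinearEquiv :
    ExtOne k f s ≃ₗ[MvPowerSeries (Fin f) k] _) ≪≫ₗ
  Submodule.quotEquivOfEqBot _ (range_toCycles_eq_bot k f s) ≪≫ₗ
  (LinearEquiv.ofEq _ _ (ker_g_eq_top k f s) ≪≫ₗ Submodule.topEquiv) ≪≫ₗ
  ModuleCat.homLinearEquiv (M := P1 k f) (N := Yc k f) (S := MvPowerSeries (Fin f) k) ≪≫ₗ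
  ((Pi.basisFun (MvPowerSeries (Fin f) k) (Fin f)).constr
    (MvPowerSeries (Fin f) k)).symm

end HomologyPart

end Statement0Aux

/-- Lemma 2.4 of the paper.  Let `k` be a field, `f ≥ 1`,
and `R = k[[X₀, …, X_{f−1}]]`.  For natural numbers `s₀, …, s_{f−1}`, let
`M = R/(X₀^{s₀+1}, …, X_{f−1}^{s_{f−1}+1})`, and regard the residue field `k`
as the `R`-module `R/(X₀, …, X_{f−1})`.  Then `Ext¹_R(M, k)` is isomorphic as
an `R`-module to `k^f`; in particular it is an `f`-dimensional `k`-vector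
space. -/
theorem statement_0 (k : Type) [Field k] (f : ℕ) (hf : 1 ≤ f) (s : Fin f → ℕ) :
    Nonempty
      (ExtOne k f s ≃ₗ[MvPowerSeries (Fin f) k] (Fin f → ResidueField k f)) := by
  exact ⟨Statement0Aux.extOneEquiv k f s⟩
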